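/- Fix i ∈ {0,…,n}. (1) For every p ≥ 1 and every smooth p-form ω on |Δ^n|, d(h^i ω) + h^i(dω) = −ω as forms on |Δ^n| (equality at every point of |Δ^n| on p-tuples of tangent vectors from V). (2) For every smooth function f on a neighborhood of |Δ^n| and every t ∈ |Δ^n|, h^i(df)(t) = f(e_i) − f(t). (Together: d h^i + h^i d = ε^i − 1, where ε^i is evaluation of the degree-0 component at the vertex e_i.) -/

import Mathlib

open MeasureTheory
open scoped BigOperators

noncomputable section

/-- ℝ^{n+1} -/
abbrev Vec (n : ℕ) := Fin (n + 1) → ℝ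

/-- standard basis vector e_i -/
def eVec (n : ℕ) (i : Fin (n + 1)) : Vec n := Pi.single i 1

/-- Raw (not necessarily alternating) inhomogeneous forms: a family of
degree-`p` "forms" given as functions of a point and a `p`-tuple of vectors. -/
def MForm (n : ℕ) := (p : ℕ) → Vec n → (Fin p → Vec n) → ℝ

/-- Embed a raw `p`-form as an inhomogeneous form concentrated in degree `p`. -/
def ofDeg (n p : ℕ) (ω : Vec n → (Fin p → Vec n) → ℝ) : MForm n :=
  fun q t v => if h : q = p then ω t (fun i => v (Fin.cast h.symm i)) else 0

/-- Exterior derivative. -/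
def exd (n : ℕ) (F : MForm n) : MForm n :=
  fun q => match q with
  | 0 => fun _ _ => 0
  | (p + 1) => fun t v =>
      ∑ j : Fin (p + 1), (-1 : ℝ) ^ (j : ℕ) *
        fderiv ℝ (fun x => F p x (fun i => v (Fin.succAbove j i))) t (v j)

/-- The Dupont operator `h^i`. -/
def hOp (n : ℕ) (i : Fin (n + 1)) (F : MForm n) : MForm n :=
  fun p t v =>
    ∫ s in (0:ℝ)..1, (1 - s) ^ p *
      F (p + 1) ((1 - s) • t + s • eVec n i) (Fin.cons (eVec n i - t) v)

/-- Iterated Dupont operators `h^{i_k} ∘ ⋯ ∘ h^{i_0}`. -/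
def hTuple (n : ℕ) {m : ℕ} (c : Fin m → Fin (n + 1)) (F : MForm n) : MForm n :=
  (List.ofFn c).foldl (fun G i => hOp n i G) F

/-- The Whitney form ω_{c 0, …, c p}. -/
def whitney (n p : ℕ) (c : Fin (p + 1) → Fin (n + 1)) :
    Vec n → (Fin p → Vec n) → ℝ :=
  fun t v => ∑ l : Fin (p + 1), (-1 : ℝ) ^ (l : ℕ) * t (c l) *
    Matrix.det (Matrix.of fun a b : Fin p => v a (c (Fin.succAbove l b)))

/-- ω̄ = p! ω. -/
def whitneyBar (n p : ℕ) (c : Fin (p + 1) → Fin (n + 1)) :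
    Vec n → (Fin p → Vec n) → ℝ :=
  fun t v => (Nat.factorial p : ℝ) * whitney n p c t v

/-- Wedge of a homogeneous `k`-form with an inhomogeneous form. -/
def wedgeHom (n k : ℕ) (α : Vec n → (Fin k → Vec n) → ℝ) (G : MForm n) : MForm n :=
  fun q t v =>
    if h : k ≤ q then
      ((Nat.factorial k : ℝ) * (Nat.factorial (q - k) : ℝ))⁻¹ *
        ∑ σ : Equiv.Perm (Fin q), ((Equiv.Perm.sign σ : ℤ) : ℝ) *
          α t (fun i => v (σ (Fin.castLE h i))) *
          G (q - k) t (fun j => v (σ (Fin.cast (Nat.add_sub_cancel' h) (Fin.natAdd k j))))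
    else 0

open scoped Classical in
/-- The Dupont homotopy. -/
def sDup (n : ℕ) (F : MForm n) : MForm n :=
  fun q t v => - ∑ k ∈ Finset.range n,
    ∑ c ∈ Finset.univ.filter (fun c : Fin (k + 1) → Fin (n + 1) => StrictMono c),
      wedgeHom n k (whitneyBar n k c) (hTuple n c F) q t v

/-- The unit cube [0,1]^p. -/
def cubeSet (p : ℕ) : Set (Fin p → ℝ) := Set.univ.pi fun _ => Set.Icc (0:ℝ) 1

/-- Canonical parametrization of the simplex with vertices `verts`. -/
def GmapV (n p : ℕ) (verts : Fin (p + 1) → Vec n) : (Fin p → ℝ) → Vec n :=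
  fun s => ∑ l : Fin (p + 1),
    ((∏ b ∈ Finset.univ.filter (fun b : Fin p => (b : ℕ) < (l : ℕ)), s b) *
      (if h : (l : ℕ) < p then 1 - s ⟨l, h⟩ else 1)) • verts l

/-- Integral of a raw `p`-form over the simplex with vertices `verts`. -/
def simplexIntV (n p : ℕ) (verts : Fin (p + 1) → Vec n)
    (ω : Vec n → (Fin p → Vec n) → ℝ) : ℝ :=
  ∫ s in cubeSet p, ω (GmapV n p verts s)
      (fun a => fderiv ℝ (GmapV n p verts) s (Pi.single a 1))

/-- ∫_{[c 0, …, c p]} ω. -/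
def simplexInt (n p : ℕ) (c : Fin (p + 1) → Fin (n + 1))
    (ω : Vec n → (Fin p → Vec n) → ℝ) : ℝ :=
  simplexIntV n p (fun l => eVec n (c l)) ω

open scoped Classical in
/-- (WR)(ω) for a homogeneous raw p-form ω. -/
def WRhom (n p : ℕ) (ω : Vec n → (Fin p → Vec n) → ℝ) :
    Vec n → (Fin p → Vec n) → ℝ :=
  fun t v =>
    ∑ c ∈ Finset.univ.filter (fun c : Fin (p + 1) → Fin (n + 1) => StrictMono c),
      simplexInt n p c ω * whitneyBar n p c t v

section DupontAuxSection
namespace DupontAux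

variable {n q : ℕ}

theorem alt_cons_decomp (f : AlternatingMap ℝ (Vec n) ℝ (Fin (q+1))) (a : Vec n)
    (w : Fin q → Vec n) :
    f (Fin.cons a w) = ∑ k : Fin (n+1), a k * f (Fin.cons (Pi.single k (1:ℝ)) w) := by
  have ha : a = ∑ k : Fin (n+1), a k • (Pi.single k (1:ℝ) : Vec n) := by
    funext j
    simp [Finset.sum_apply, Pi.single_apply]
  calc f (Fin.cons a w)
      = f (Function.update (Fin.cons a w) 0 (∑ k : Fin (n+1), a k • (Pi.single k (1:ℝ) : Vec n))) := by
        rw [← ha, Fin.update_cons_zero]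
    _ = ∑ k : Fin (n+1), a k * f (Fin.cons (Pi.single k (1:ℝ)) w) := by
        rw [f.map_update_sum]
        refine Finset.sum_congr rfl fun k _ => ?_
        rw [f.map_update_smul, Fin.update_cons_zero, smul_eq_mul]

theorem alt_cons_self (f : AlternatingMap ℝ (Vec n) ℝ (Fin (q+1))) (v : Fin (q+1) → Vec n)
    (j : Fin (q+1)) :
    f (Fin.cons (v j) (fun m => v (j.succAbove m))) = (-1:ℝ)^(j:ℕ) * f v := by
  have h : (Fin.cons (v j) (fun m => v (j.succAbove m)) : Fin (q+1) → Vec n)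
      = v ∘ j.cycleRange.symm := by
    funext m
    induction m using Fin.cases <;> simp
  rw [h, AlternatingMap.map_perm]
  rw [Equiv.Perm.sign_symm, Fin.sign_cycleRange]
  simp [Units.smul_def]

/-- the path `(1-s)•x + s•e_i` -/
def phi (n : ℕ) (i : Fin (n+1)) (s : ℝ) (x : Vec n) : Vec n := (1-s) • x + s • eVec n i

/-- derivative in `x` of the `hOp` integrand -/
def Phi (i : Fin (n+1)) (ω : Vec n → AlternatingMap ℝ (Vec n) ℝ (Fin (q+1)))
    (w : Fin q → Vec n) (s : ℝ) (x : Vec n) : Vec n →L[ℝ] ℝ :=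
  (1-s)^q • ∑ k : Fin (n+1),
    (((eVec n i - x) k) • ((1-s) • fderiv ℝ (fun y => ω y (Fin.cons (Pi.single k (1:ℝ)) w)) (phi n i s x))
      + (ω (phi n i s x) (Fin.cons (Pi.single k (1:ℝ)) w)) •
          (-(ContinuousLinearMap.proj (R := ℝ) (φ := fun _ : Fin (n+1) => ℝ) k)))

lemma hone : ((⊤:ℕ∞) : WithTop ℕ∞) ≠ 0 := by simp

variable {i : Fin (n+1)} {ω : Vec n → AlternatingMap ℝ (Vec n) ℝ (Fin (q+1))}
  {w : Fin q → Vec n}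

theorem hasFDerivAt_phi (s : ℝ) (x : Vec n) :
    HasFDerivAt (phi n i s) ((1-s) • ContinuousLinearMap.id ℝ (Vec n)) x :=
  ((hasFDerivAt_id x).const_smul (1-s)).add_const (s • eVec n i)

theorem hasFDerivAt_integrand (hω : ∀ v, ContDiff ℝ (⊤ : ℕ∞) (fun t => ω t v))
    (s : ℝ) (x : Vec n) :
    HasFDerivAt (fun x' => (1-s)^q * ω (phi n i s x') (Fin.cons (eVec n i - x') w))
      (Phi i ω w s x) x := by
  have hrw : (fun x' : Vec n => (1-s)^q * ω (phi n i s x') (Fin.cons (eVec n i - x') w))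
      = fun x' => (1-s)^q * ∑ k : Fin (n+1),
          (eVec n i - x') k * ω (phi n i s x') (Fin.cons (Pi.single k (1:ℝ)) w) := by
    funext x'; rw [alt_cons_decomp]
  rw [hrw]
  refine HasFDerivAt.const_mul ?_ _
  refine HasFDerivAt.fun_sum fun k _ => ?_
  have hc : HasFDerivAt (fun x' : Vec n => (eVec n i - x') k)
      (-(ContinuousLinearMap.proj (R := ℝ) (φ := fun _ : Fin (n+1) => ℝ) k)) x := by
    have : (fun x' : Vec n => (eVec n i - x') k) = fun x' : Vec n => eVec n i k - x' k := by
      funext x'; simp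
    rw [this]
    simpa using (hasFDerivAt_const (eVec n i k) x).fun_sub
      ((ContinuousLinearMap.proj (R := ℝ) (φ := fun _ : Fin (n+1) => ℝ) k).hasFDerivAt)
  have hd : HasFDerivAt (fun x' => ω (phi n i s x') (Fin.cons (Pi.single k (1:ℝ)) w))
      ((1-s) • fderiv ℝ (fun y => ω y (Fin.cons (Pi.single k (1:ℝ)) w)) (phi n i s x)) x := by
    have hg := ((hω (Fin.cons (Pi.single k (1:ℝ)) w)).differentiable hone
      (phi n i s x)).hasFDerivAt
    have h2 := hg.comp x (hasFDerivAt_phi s x)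
    refine h2.congr_fderiv ?_
    ext d
    simp [mul_comm]
  have := hc.fun_mul hd
  convert this using 1

theorem fderiv_cons_decomp (hω : ∀ v, ContDiff ℝ (⊤ : ℕ∞) (fun t => ω t v))
    (c : Vec n) (y : Vec n) :
    fderiv ℝ (fun y => ω y (Fin.cons c w)) y
      = ∑ k : Fin (n+1), (c k) • fderiv ℝ (fun y => ω y (Fin.cons (Pi.single k (1:ℝ)) w)) y := by
  have h1 : (fun y => ω y (Fin.cons c w))
      = fun y => ∑ k : Fin (n+1), c k * ω y (Fin.cons (Pi.single k (1:ℝ)) w) :=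
    funext fun y => alt_cons_decomp _ _ _
  rw [h1]
  have h2 : HasFDerivAt (fun y => ∑ k : Fin (n+1), c k * ω y (Fin.cons (Pi.single k (1:ℝ)) w))
      (∑ k : Fin (n+1), (c k) • fderiv ℝ (fun y => ω y (Fin.cons (Pi.single k (1:ℝ)) w)) y) y :=
    HasFDerivAt.fun_sum fun k _ =>
      (((hω _).differentiable hone _).hasFDerivAt).const_mul _
  exact h2.fderiv

theorem Phi_apply (hω : ∀ v, ContDiff ℝ (⊤ : ℕ∞) (fun t => ω t v)) (s : ℝ) (x d : Vec n) :
    Phi i ω w s x d = (1-s)^q *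
      ((1-s) * fderiv ℝ (fun y => ω y (Fin.cons (eVec n i - x) w)) (phi n i s x) d
        - ω (phi n i s x) (Fin.cons d w)) := by
  rw [fderiv_cons_decomp hω, alt_cons_decomp (ω (phi n i s x)) d w]
  simp only [Phi, ContinuousLinearMap.smul_apply, ContinuousLinearMap.sum_apply,
    ContinuousLinearMap.add_apply, ContinuousLinearMap.neg_apply, ContinuousLinearMap.proj_apply,
    smul_eq_mul, Finset.sum_apply, Finset.mul_sum]
  rw [← Finset.sum_sub_distrib, Finset.mul_sum]
  refine Finset.sum_congr rfl fun k _ => by ring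

theorem continuous_Phi (hω : ∀ v, ContDiff ℝ (⊤ : ℕ∞) (fun t => ω t v)) :
    Continuous (fun p : ℝ × Vec n => Phi i ω w p.1 p.2) := by
  have hphi : Continuous (fun p : ℝ × Vec n => phi n i p.1 p.2) := by
    unfold phi; fun_prop
  refine Continuous.smul (by fun_prop : Continuous fun p : ℝ × Vec n => (1-p.1)^q) ?_
  refine continuous_finset_sum _ fun k _ => Continuous.add ?_ ?_
  · refine Continuous.smul (by fun_prop : Continuous fun p : ℝ × Vec n => (eVec n i - p.2) k)
      (Continuous.smul (by fun_prop : Continuous fun p : ℝ × Vec n => 1 - p.1) ?_)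
    exact ((hω _).continuous_fderiv hone).comp hphi
  · exact Continuous.smul (((hω _).continuous).comp hphi) continuous_const

theorem hasFDerivAt_integral (hω : ∀ v, ContDiff ℝ (⊤ : ℕ∞) (fun t => ω t v)) (t : Vec n) :
    HasFDerivAt (fun x => ∫ s in (0:ℝ)..1, (1-s)^q * ω (phi n i s x) (Fin.cons (eVec n i - x) w))
      (∫ s in (0:ℝ)..1, Phi i ω w s t) t := by
  obtain ⟨C, hC⟩ := (isCompact_Icc.prod (isCompact_closedBall t 1)).exists_bound_of_continuousOn
    (continuous_Phi (w := w) hω).continuousOn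
  have hcont : ∀ x : Vec n, Continuous
      (fun s => (1-s)^q * ω (phi n i s x) (Fin.cons (eVec n i - x) w)) := by
    intro x
    have : Continuous (fun s : ℝ => phi n i s x) := by unfold phi; fun_prop
    exact (by fun_prop : Continuous fun s : ℝ => (1-s)^q).mul
      (((hω _).continuous).comp this)
  refine intervalIntegral.hasFDerivAt_integral_of_dominated_of_fderiv_le
    (F' := fun x s => Phi i ω w s x) (bound := fun _ => C) (s := Metric.ball t 1) (Metric.ball_mem_nhds t one_pos)
    (Filter.Eventually.of_forall fun x => (hcont x).aestronglyMeasurable)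
    ((hcont t).intervalIntegrable 0 1)
    (((continuous_Phi (w := w) hω).comp
      (continuous_id.prodMk continuous_const : Continuous fun s : ℝ => (s, t))).aestronglyMeasurable)
    (ae_of_all _ fun s hs x hx => ?_) intervalIntegrable_const
    (ae_of_all _ fun s _ x _ => hasFDerivAt_integrand hω s x)
  have hs' : s ∈ Set.Icc (0:ℝ) 1 := by
    rw [Set.uIoc_of_le zero_le_one] at hs
    exact Set.Ioc_subset_Icc_self hs
  exact hC (s, x) ⟨hs', Metric.ball_subset_closedBall hx⟩

theorem hasDerivAt_path (t : Vec n) (s : ℝ) :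
    HasDerivAt (fun s : ℝ => phi n i s t) (eVec n i - t) s := by
  have ha : HasDerivAt (fun s : ℝ => (1-s) • t) ((-1 : ℝ) • t) s :=
    ((hasDerivAt_id s).const_sub 1).smul_const t
  have hb : HasDerivAt (fun s : ℝ => s • eVec n i) ((1:ℝ) • eVec n i) s :=
    (hasDerivAt_id s).smul_const (eVec n i)
  have := ha.fun_add hb
  refine this.congr_deriv ?_
  simp only [neg_one_smul, one_smul]
  abel

theorem hasDerivAt_G (hω : ∀ v, ContDiff ℝ (⊤ : ℕ∞) (fun t => ω t v))
    (t : Vec n) (v : Fin (q+1) → Vec n) (s : ℝ) :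
    HasDerivAt (fun s => (1-s)^(q+1) * ω (phi n i s t) v)
      (-((q:ℝ)+1) * (1-s)^q * ω (phi n i s t) v
        + (1-s)^(q+1) * fderiv ℝ (fun y => ω y v) (phi n i s t) (eVec n i - t)) s := by
  have h1 : HasDerivAt (fun s : ℝ => (1-s)^(q+1)) (-(((q:ℝ)+1) * (1-s)^q)) s := by
    have := (((hasDerivAt_id s).const_sub 1)).fun_pow (q+1)
    refine this.congr_deriv ?_
    simp only [id_eq, Nat.add_sub_cancel]
    push_cast
    ring
  have h2 : HasDerivAt (fun s => ω (phi n i s t) v)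
      (fderiv ℝ (fun y => ω y v) (phi n i s t) (eVec n i - t)) s :=
    (((hω v).differentiable hone _).hasFDerivAt).comp_hasDerivAt s (hasDerivAt_path t s)
  have := h1.fun_mul h2
  refine this.congr_deriv ?_
  ring

theorem integrand_identity (hω : ∀ v, ContDiff ℝ (⊤ : ℕ∞) (fun t => ω t v))
    (t : Vec n) (v : Fin (q+1) → Vec n) (s : ℝ) :
    (∑ j : Fin (q+1), (-1:ℝ)^(j:ℕ) * Phi i ω (fun m => v (j.succAbove m)) s t (v j))
      + (1-s)^(q+1) * (∑ k : Fin (q+2), (-1:ℝ)^(k:ℕ) *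
          fderiv ℝ (fun x => ω x (fun m =>
            (Fin.cons (eVec n i - t) v : Fin (q+2) → Vec n) (k.succAbove m))) (phi n i s t)
            ((Fin.cons (eVec n i - t) v : Fin (q+2) → Vec n) k))
    = -((q:ℝ)+1) * (1-s)^q * ω (phi n i s t) v
      + (1-s)^(q+1) * fderiv ℝ (fun y => ω y v) (phi n i s t) (eVec n i - t) := by
  have h0 : (fun m => (Fin.cons (eVec n i - t) v : Fin (q+2) → Vec n)
      ((0 : Fin (q+2)).succAbove m)) = v := by
    funext m; simp [Fin.succAbove_zero]
  have hsucc : ∀ j : Fin (q+1), (fun m => (Fin.cons (eVec n i - t) v : Fin (q+2) → Vec n)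
      ((Fin.succ j).succAbove m)) = Fin.cons (eVec n i - t) (fun m => v (j.succAbove m)) := by
    intro j; funext m
    induction m using Fin.cases with
    | zero => simp [Fin.succ_succAbove_zero]
    | succ m => simp [Fin.succ_succAbove_succ]
  have hsplit : (∑ k : Fin (q+2), (-1:ℝ)^(k:ℕ) *
          fderiv ℝ (fun x => ω x (fun m =>
            (Fin.cons (eVec n i - t) v : Fin (q+2) → Vec n) (k.succAbove m))) (phi n i s t)
            ((Fin.cons (eVec n i - t) v : Fin (q+2) → Vec n) k))
      = fderiv ℝ (fun y => ω y v) (phi n i s t) (eVec n i - t)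
        + ∑ j : Fin (q+1), (-1:ℝ)^((j:ℕ)+1) *
            fderiv ℝ (fun y => ω y (Fin.cons (eVec n i - t)
              (fun m => v (j.succAbove m)))) (phi n i s t) (v j) := by
    rw [Fin.sum_univ_succ]
    simp only [h0, hsucc, Fin.cons_zero, Fin.cons_succ, Fin.val_zero, pow_zero, one_mul,
      Fin.val_succ]
  rw [hsplit]
  have hPhi : ∀ j : Fin (q+1), Phi i ω (fun m => v (j.succAbove m)) s t (v j)
      = (1-s)^q * ((1-s) * fderiv ℝ (fun y => ω y (Fin.cons (eVec n i - t)
          (fun m => v (j.succAbove m)))) (phi n i s t) (v j)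
        - (-1:ℝ)^(j:ℕ) * ω (phi n i s t) v) := by
    intro j
    rw [Phi_apply hω, alt_cons_self]
  simp only [hPhi]
  have key : ∀ (j:ℕ) (Dj W' : ℝ), (-1:ℝ)^j * ((1-s)^q * ((1-s) * Dj - (-1:ℝ)^j * W'))
      = (1-s)^(q+1) * ((-1:ℝ)^j * Dj) - (1-s)^q * W' := by
    intro j Dj W'
    have h1 : (-1:ℝ)^j * (-1)^j = 1 := by
      rw [← pow_add, ← two_mul, pow_mul]; norm_num
    rw [pow_succ]
    linear_combination (-((1-s)^q * W')) * h1
  have hflip : ∀ (j:ℕ) (Dj : ℝ), (-1:ℝ)^(j+1) * Dj = -((-1:ℝ)^j * Dj) := by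
    intro j Dj; rw [pow_succ]; ring
  simp only [key, hflip]
  rw [Finset.sum_sub_distrib, Finset.sum_const, Finset.card_univ, Fintype.card_fin,
    ← Finset.mul_sum, Finset.sum_neg_distrib]
  push_cast [nsmul_eq_mul]
  ring


theorem continuous_path (i : Fin (n+1)) (t : Vec n) : Continuous fun s : ℝ => phi n i s t := by
  unfold phi; fun_prop

theorem continuous_Phi_slice (hω : ∀ v, ContDiff ℝ (⊤ : ℕ∞) (fun t => ω t v)) (t : Vec n) :
    Continuous fun s => Phi i ω w s t :=
  (continuous_Phi hω).comp (continuous_id.prodMk continuous_const)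

theorem continuous_Phi_apply (hω : ∀ v, ContDiff ℝ (⊤ : ℕ∞) (fun t => ω t v)) (t d : Vec n) :
    Continuous fun s => Phi i ω w s t d :=
  (continuous_Phi_slice hω t).clm_apply continuous_const

theorem interval_clm_apply {m : ℕ} {f : ℝ → (Vec m →L[ℝ] ℝ)} (hf : Continuous f) (d : Vec m) :
    (∫ s in (0:ℝ)..1, f s) d = ∫ s in (0:ℝ)..1, f s d := by
  rw [intervalIntegral.integral_of_le zero_le_one, intervalIntegral.integral_of_le zero_le_one]
  exact ContinuousLinearMap.integral_apply (hf.intervalIntegrable 0 1).1 d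

end DupontAux

end DupontAuxSection

/-- `d h^i + h^i d = ε^i - 1`. -/
theorem dupont_operator_homotopy (n : ℕ) (i : Fin (n + 1)) :
    -- (1) on p-forms with p ≥ 1 : d(h^i ω) + h^i(dω) = -ω
    (∀ q : ℕ, ∀ ω : Vec n → AlternatingMap ℝ (Vec n) ℝ (Fin (q + 1)),
      (∀ v : Fin (q + 1) → Vec n, ContDiff ℝ (⊤ : ℕ∞) (fun t => ω t v)) →
      ∀ t ∈ stdSimplex ℝ (Fin (n + 1)), ∀ v : Fin (q + 1) → Vec n,
        (∀ a, ∑ j, v a j = 0) →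
        exd n (hOp n i (ofDeg n (q + 1) (fun x u => ω x u))) (q + 1) t v
          + hOp n i (exd n (ofDeg n (q + 1) (fun x u => ω x u))) (q + 1) t v
        = - ω t v)
    ∧
    -- (2) on functions : h^i(df)(t) = f(e_i) - f(t)
    (∀ f : Vec n → ℝ, ContDiff ℝ (⊤ : ℕ∞) f →
      ∀ t ∈ stdSimplex ℝ (Fin (n + 1)),
        hOp n i (exd n (ofDeg n 0 (fun x _ => f x))) 0 t (fun j => j.elim0)
          = f (eVec n i) - f t) := by
  constructor
  · intro q ω hω t ht v hv
    clear ht hv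
    have hF : ∀ (y : Vec n) (u : Fin (q+1) → Vec n),
        ofDeg n (q+1) (fun x u => ω x u) (q+1) y u = ω y u := by
      intro y u; simp [ofDeg]
    have hhop : ∀ (x : Vec n) (w' : Fin q → Vec n),
        hOp n i (ofDeg n (q+1) fun x u => ω x u) q x w'
          = ∫ s in (0:ℝ)..1, (1-s)^q *
              ω (DupontAux.phi n i s x) (Fin.cons (eVec n i - x) w') := by
      intro x w'
      simp only [hOp]
      refine intervalIntegral.integral_congr fun s _ => ?_
      rw [hF]
      rfl
    have hfd : ∀ j : Fin (q+1),
        fderiv ℝ (fun x => hOp n i (ofDeg n (q+1) fun x u => ω x u) q x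
            (fun m => v (j.succAbove m))) t
          = ∫ s in (0:ℝ)..1, DupontAux.Phi i ω (fun m => v (j.succAbove m)) s t := by
      intro j
      have h1 : (fun x => hOp n i (ofDeg n (q+1) fun x u => ω x u) q x
            (fun m => v (j.succAbove m)))
          = fun x => ∫ s in (0:ℝ)..1, (1-s)^q *
              ω (DupontAux.phi n i s x)
                (Fin.cons (eVec n i - x) (fun m => v (j.succAbove m))) :=
        funext fun x => hhop x _
      rw [h1]
      exact (DupontAux.hasFDerivAt_integral hω t).fderiv
    have hexd1 : exd n (hOp n i (ofDeg n (q+1) fun x u => ω x u)) (q+1) t v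
        = ∫ s in (0:ℝ)..1, ∑ j : Fin (q+1),
            (-1:ℝ)^(j:ℕ) * DupontAux.Phi i ω (fun m => v (j.succAbove m)) s t (v j) := by
      calc exd n (hOp n i (ofDeg n (q+1) fun x u => ω x u)) (q+1) t v
          = ∑ j : Fin (q+1), (-1:ℝ)^(j:ℕ) *
              fderiv ℝ (fun x => hOp n i (ofDeg n (q+1) fun x u => ω x u) q x
                (fun m => v (j.succAbove m))) t (v j) := rfl
        _ = ∑ j : Fin (q+1), ∫ s in (0:ℝ)..1,
              (-1:ℝ)^(j:ℕ) * DupontAux.Phi i ω (fun m => v (j.succAbove m)) s t (v j) := by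
            refine Finset.sum_congr rfl fun j _ => ?_
            rw [hfd j,
              DupontAux.interval_clm_apply (DupontAux.continuous_Phi_slice hω t) (v j),
              intervalIntegral.integral_const_mul]
        _ = _ := (intervalIntegral.integral_finset_sum fun j _ =>
              ((continuous_const.mul
                (DupontAux.continuous_Phi_apply hω t (v j))).intervalIntegrable 0 1)).symm
    have hexd2 : ∀ (y : Vec n) (z : Fin (q+2) → Vec n),
        exd n (ofDeg n (q+1) fun x u => ω x u) (q+2) y z
          = ∑ k : Fin (q+2), (-1:ℝ)^(k:ℕ) *
              fderiv ℝ (fun x => ω x (fun m => z (k.succAbove m))) y (z k) := by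
      intro y z
      have h0 : exd n (ofDeg n (q+1) fun x u => ω x u) (q+2) y z
          = ∑ k : Fin (q+2), (-1:ℝ)^(k:ℕ) *
              fderiv ℝ (fun x => ofDeg n (q+1) (fun x u => ω x u) (q+1) x
                (fun m => z (k.succAbove m))) y (z k) := rfl
      rw [h0]
      refine Finset.sum_congr rfl fun k _ => ?_
      have h1 : (fun x => ofDeg n (q+1) (fun x u => ω x u) (q+1) x
            (fun m => z (k.succAbove m)))
          = fun x => ω x (fun m => z (k.succAbove m)) := funext fun x => hF x _
      rw [h1]
    have hhop2 : hOp n i (exd n (ofDeg n (q+1) fun x u => ω x u)) (q+1) t v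
        = ∫ s in (0:ℝ)..1, (1-s)^(q+1) * ∑ k : Fin (q+2), (-1:ℝ)^(k:ℕ) *
            fderiv ℝ (fun x => ω x (fun m =>
              (Fin.cons (eVec n i - t) v : Fin (q+2) → Vec n) (k.succAbove m)))
              (DupontAux.phi n i s t)
              ((Fin.cons (eVec n i - t) v : Fin (q+2) → Vec n) k) := by
      simp only [hOp]
      refine intervalIntegral.integral_congr fun s _ => ?_
      rw [hexd2]
      rfl
    have hint1 : IntervalIntegrable (fun s => ∑ j : Fin (q+1),
        (-1:ℝ)^(j:ℕ) * DupontAux.Phi i ω (fun m => v (j.succAbove m)) s t (v j))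
        MeasureTheory.volume 0 1 :=
      (continuous_finset_sum _ fun j _ => continuous_const.mul
        (DupontAux.continuous_Phi_apply hω t (v j))).intervalIntegrable 0 1
    have hint2 : IntervalIntegrable (fun s => (1-s)^(q+1) * ∑ k : Fin (q+2), (-1:ℝ)^(k:ℕ) *
            fderiv ℝ (fun x => ω x (fun m =>
              (Fin.cons (eVec n i - t) v : Fin (q+2) → Vec n) (k.succAbove m)))
              (DupontAux.phi n i s t)
              ((Fin.cons (eVec n i - t) v : Fin (q+2) → Vec n) k))
        MeasureTheory.volume 0 1 := by
      refine Continuous.intervalIntegrable ?_ 0 1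
      refine (by fun_prop : Continuous fun s : ℝ => (1-s)^(q+1)).mul
        (continuous_finset_sum _ fun k _ => continuous_const.mul ?_)
      exact (((hω _).continuous_fderiv DupontAux.hone).comp
        (DupontAux.continuous_path i t)).clm_apply continuous_const
    have hint3 : IntervalIntegrable (fun s => -((q:ℝ)+1) * (1-s)^q * ω (DupontAux.phi n i s t) v
        + (1-s)^(q+1) * fderiv ℝ (fun y => ω y v) (DupontAux.phi n i s t) (eVec n i - t))
        MeasureTheory.volume 0 1 := by
      refine Continuous.intervalIntegrable (Continuous.add ?_ ?_) 0 1
      · exact (by fun_prop : Continuous fun s : ℝ => -((q:ℝ)+1) * (1-s)^q).mul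
          ((hω v).continuous.comp (DupontAux.continuous_path i t))
      · exact (by fun_prop : Continuous fun s : ℝ => (1-s)^(q+1)).mul
          ((((hω v).continuous_fderiv DupontAux.hone).comp
            (DupontAux.continuous_path i t)).clm_apply continuous_const)
    rw [hexd1, hhop2, ← intervalIntegral.integral_add hint1 hint2]
    calc (∫ s in (0:ℝ)..1, ((∑ j : Fin (q+1),
            (-1:ℝ)^(j:ℕ) * DupontAux.Phi i ω (fun m => v (j.succAbove m)) s t (v j))
          + (1-s)^(q+1) * ∑ k : Fin (q+2), (-1:ℝ)^(k:ℕ) *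
            fderiv ℝ (fun x => ω x (fun m =>
              (Fin.cons (eVec n i - t) v : Fin (q+2) → Vec n) (k.succAbove m)))
              (DupontAux.phi n i s t)
              ((Fin.cons (eVec n i - t) v : Fin (q+2) → Vec n) k)))
        = ∫ s in (0:ℝ)..1, (-((q:ℝ)+1) * (1-s)^q * ω (DupontAux.phi n i s t) v
            + (1-s)^(q+1) * fderiv ℝ (fun y => ω y v) (DupontAux.phi n i s t) (eVec n i - t)) :=
          intervalIntegral.integral_congr fun s _ => DupontAux.integrand_identity hω t v s
      _ = (fun s : ℝ => (1-s)^(q+1) * ω (DupontAux.phi n i s t) v) 1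
          - (fun s : ℝ => (1-s)^(q+1) * ω (DupontAux.phi n i s t) v) 0 :=
          intervalIntegral.integral_eq_sub_of_hasDerivAt
            (fun s _ => DupontAux.hasDerivAt_G hω t v s) hint3
      _ = - ω t v := by
          norm_num [DupontAux.phi]
  · intro f hf t ht
    clear ht
    have hF0 : ∀ (y : Vec n) (u : Fin 0 → Vec n), ofDeg n 0 (fun x _ => f x) 0 y u = f y := by
      intro y u; simp [ofDeg]
    have h1 : hOp n i (exd n (ofDeg n 0 fun x _ => f x)) 0 t (fun j => j.elim0)
        = ∫ s in (0:ℝ)..1, fderiv ℝ f (DupontAux.phi n i s t) (eVec n i - t) := by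
      simp only [hOp]
      refine intervalIntegral.integral_congr fun s _ => ?_
      have h2 : exd n (ofDeg n 0 fun x _ => f x) (0+1) ((1-s) • t + s • eVec n i)
          (Fin.cons (eVec n i - t) fun j => j.elim0)
          = ∑ j : Fin 1, (-1:ℝ)^(j:ℕ) *
              fderiv ℝ (fun x => ofDeg n 0 (fun x _ => f x) 0 x
                (fun m => (Fin.cons (eVec n i - t) (fun j : Fin 0 => j.elim0) : Fin 1 → Vec n)
                  (j.succAbove m)))
                ((1-s) • t + s • eVec n i)
                ((Fin.cons (eVec n i - t) (fun j : Fin 0 => j.elim0) : Fin 1 → Vec n) j) := rfl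
      rw [h2, Fin.sum_univ_one]
      have h3 : (fun x => ofDeg n 0 (fun x _ => f x) 0 x
            (fun m => (Fin.cons (eVec n i - t) (fun j : Fin 0 => j.elim0) : Fin 1 → Vec n)
              ((0 : Fin 1).succAbove m)))
          = f := funext fun x => hF0 x _
      rw [h3]
      simp only [pow_zero, one_mul, Fin.val_zero, Fin.cons_zero]
      rfl
    rw [h1]
    have hd : ∀ s ∈ Set.uIcc (0:ℝ) 1, HasDerivAt (fun s => f (DupontAux.phi n i s t))
        (fderiv ℝ f (DupontAux.phi n i s t) (eVec n i - t)) s := fun s _ =>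
      ((hf.differentiable DupontAux.hone _).hasFDerivAt).comp_hasDerivAt s
        (DupontAux.hasDerivAt_path t s)
    have hint : IntervalIntegrable (fun s => fderiv ℝ f (DupontAux.phi n i s t) (eVec n i - t))
        MeasureTheory.volume 0 1 :=
      ((((hf.continuous_fderiv DupontAux.hone).comp
        (DupontAux.continuous_path i t)).clm_apply continuous_const).intervalIntegrable 0 1)
    rw [intervalIntegral.integral_eq_sub_of_hasDerivAt hd hint]
    norm_num [DupontAux.phi]

end
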